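/- Let ℓ be odd, ε a primitive ℓ-th root of unity, and for parameters u, v, x with the quantities (xv^{-1}ε^{-2m+1}-1)(vε^{2m-1}-x^{-1}) nonzero for all m, let z satisfy z^ℓ = (x^ℓ v^{-ℓ} - 1)(v^ℓ - x^{-ℓ}). Define the diagonal operator U on ℂ^ℓ by U v_n = z ∏_{m=1}^n ((xv^{-1}ε^{-2m+1}-1)^{-1}(vε^{2m-1}-x^{-1})^{-1}) v_n. Then U satisfies U^{-1} (xv^{-1}εA^{-1}-1)(vAε^{-1}-x^{-1}) B^{-1} U = B^{-1}, where A, B are the clock and shift matrices. -/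

import Mathlib

open Finset in
lemma aux_prod_eval (ℓ : ℕ) [NeZero ℓ] (ε : ℂ) (hε : IsPrimitiveRoot ε ℓ) (c : ℂ) :
    ∏ i ∈ range ℓ, (c - ε ^ i) = c ^ ℓ - 1 := by
  have h := X_pow_sub_C_eq_prod hε (Nat.pos_of_ne_zero (NeZero.ne ℓ)) (one_pow ℓ)
  have := congrArg (Polynomial.eval c) h
  rw [Polynomial.eval_prod] at this
  simp only [Polynomial.eval_sub, Polynomial.eval_pow, Polynomial.eval_X, Polynomial.eval_C,
    Polynomial.eval_one, Polynomial.eval_mul, mul_one] at this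
  exact this.symm

open Finset in
lemma aux_prod_lin (ℓ : ℕ) [NeZero ℓ] (hodd : Odd ℓ) (ε : ℂ) (hε : IsPrimitiveRoot ε ℓ)
    (a b : ℂ) : ∏ i ∈ range ℓ, (a * ε ^ i - b) = a ^ ℓ - b ^ ℓ := by
  rcases eq_or_ne a 0 with rfl | ha
  · simp [zero_pow (NeZero.ne ℓ), hodd.neg_pow]
  · have : ∀ i ∈ range ℓ, a * ε ^ i - b = (-a) * (b / a - ε ^ i) := by
      intro i _; field_simp; ring
    rw [Finset.prod_congr rfl this, Finset.prod_mul_distrib, Finset.prod_const,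
      aux_prod_eval ℓ ε hε, Finset.card_range, hodd.neg_pow, div_pow]
    field_simp
    ring

open Finset in
lemma aux_epow (ℓ : ℕ) [NeZero ℓ] (ε : ℂ) (hε : IsPrimitiveRoot ε ℓ) (k : ℤ) :
    ε ^ k = ε ^ ((k : ZMod ℓ)).val := by
  have hne : ε ≠ 0 := hε.ne_zero (NeZero.ne ℓ)
  have h : (((k : ZMod ℓ).val : ℤ)) = k % ℓ := ZMod.val_intCast k
  have : k = ((k : ZMod ℓ).val : ℤ) + ℓ * (k / ℓ) := by
    rw [h]; exact (Int.emod_add_mul_ediv k ℓ).symm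
  conv_lhs => rw [this]
  rw [zpow_add₀ hne, zpow_natCast, zpow_mul, zpow_natCast, hε.pow_eq_one, one_zpow,
    mul_one]

open Finset in
lemma aux_range_univ (ℓ : ℕ) [NeZero ℓ] (g : ZMod ℓ → ℂ) :
    ∏ m ∈ range ℓ, g (m : ZMod ℓ) = ∏ j : ZMod ℓ, g j := by
  exact Finset.prod_nbij' (fun m => (m : ZMod ℓ)) (fun j => j.val)
    (fun m _ => Finset.mem_univ _) (fun j _ => Finset.mem_range.2 (ZMod.val_lt j))
    (fun m hm => ZMod.val_cast_of_lt (Finset.mem_range.1 hm))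
    (fun j _ => ZMod.natCast_rightInverse j) (fun m _ => rfl)

open Finset in
lemma aux_prod_lin' (ℓ : ℕ) [NeZero ℓ] (hodd : Odd ℓ) (ε : ℂ) (hε : IsPrimitiveRoot ε ℓ)
    (a b : ℂ) (c d : ℤ) (hc : IsUnit (c : ZMod ℓ)) :
    ∏ m ∈ range ℓ, (a * ε ^ (c * (m : ℤ) + d) - b) = a ^ ℓ - b ^ ℓ := by
  set g : ZMod ℓ → ℂ := fun t => a * ε ^ t.val - b with hg
  have step1 : ∀ m : ℕ, a * ε ^ (c * (m : ℤ) + d) - b = g (c * (m : ZMod ℓ) + d) := by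
    intro m
    rw [hg]
    simp only
    rw [aux_epow ℓ ε hε]
    push_cast
    ring_nf
  calc ∏ m ∈ range ℓ, (a * ε ^ (c * (m : ℤ) + d) - b)
      = ∏ m ∈ range ℓ, g ((fun j => (c : ZMod ℓ) * j + d) (m : ZMod ℓ)) := by
        exact Finset.prod_congr rfl fun m _ => step1 m
    _ = ∏ j : ZMod ℓ, g ((c : ZMod ℓ) * j + d) := aux_range_univ ℓ (fun j => g ((c : ZMod ℓ) * j + d))
    _ = ∏ j : ZMod ℓ, g j := by
        exact Equiv.prod_comp ((Units.mulLeft hc.unit).trans (Equiv.addRight (d : ZMod ℓ))) g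
    _ = ∏ m ∈ range ℓ, g (m : ZMod ℓ) := (aux_range_univ ℓ g).symm
    _ = ∏ m ∈ range ℓ, (a * ε ^ m - b) := by
        refine Finset.prod_congr rfl fun m hm => ?_
        rw [hg]; simp only
        rw [ZMod.val_cast_of_lt (Finset.mem_range.1 hm)]
    _ = a ^ ℓ - b ^ ℓ := aux_prod_lin ℓ hodd ε hε a b

/-- The diagonal operator U (with `U vₙ = zⁿ ∏_{m<n} wₘ⁻¹ vₙ`, where
`wₘ = (xv⁻¹ε^{-2m+1}-1)(vε^{2m-1}-x⁻¹)` and `zℓ = (xℓv^{-ℓ}-1)(vℓ-x^{-ℓ})`)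
conjugates `(xv⁻¹εA⁻¹-1)(vAε⁻¹-x⁻¹)B⁻¹` into `z·B⁻¹`. -/
theorem U_conjugates_F_part_to_shift (ℓ : ℕ) [NeZero ℓ] (hodd : Odd ℓ) (ε : ℂ)
    (hε : IsPrimitiveRoot ε ℓ) (u v x z : ℂ)
    (hw : ∀ m : ℕ,
      (x * v⁻¹ * ε ^ (-2 * (m : ℤ) + 1) - 1) * (v * ε ^ (2 * (m : ℤ) - 1) - x⁻¹) ≠ 0)
    (hz : z ^ ℓ = (x ^ ℓ * (v ^ ℓ)⁻¹ - 1) * (v ^ ℓ - (x ^ ℓ)⁻¹))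
    (A B U : Matrix (ZMod ℓ) (ZMod ℓ) ℂ)
    (hA : A = Matrix.diagonal fun n : ZMod ℓ => ε ^ (2 * n.val))
    (hB : B = Matrix.of fun i j : ZMod ℓ => if i = j + 1 then 1 else 0)
    (hU : U = Matrix.diagonal fun n : ZMod ℓ => z ^ n.val *
      ∏ m ∈ Finset.range n.val,
        ((x * v⁻¹ * ε ^ (-2 * (m : ℤ) + 1) - 1) * (v * ε ^ (2 * (m : ℤ) - 1) - x⁻¹))⁻¹) :
    U⁻¹ * (((x * v⁻¹ * ε) • A⁻¹ - 1) *
        ((v * ε⁻¹) • A - x⁻¹ • (1 : Matrix (ZMod ℓ) (ZMod ℓ) ℂ)) * B⁻¹) * U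
      = z • B⁻¹ := by
  have hℓ : ℓ ≠ 0 := NeZero.ne ℓ
  have hεne : ε ≠ 0 := hε.ne_zero hℓ
  set w : ℕ → ℂ := fun m =>
    (x * v⁻¹ * ε ^ (-2 * (m : ℤ) + 1) - 1) * (v * ε ^ (2 * (m : ℤ) - 1) - x⁻¹) with hwdef
  have hwne : ∀ m, w m ≠ 0 := fun m => hw m
  -- the product identity
  have h2 : IsUnit (2 : ZMod ℓ) := by
    rw [show ((2 : ZMod ℓ)) = ((2 : ℕ) : ZMod ℓ) by norm_cast, ZMod.isUnit_iff_coprime]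
    rcases hodd with ⟨k, hk⟩
    subst hk
    simp [Nat.coprime_comm, Nat.add_mul_mod_self_left]
  have hcneg : IsUnit (((-2 : ℤ) : ZMod ℓ)) := by push_cast; exact h2.neg
  have hcpos : IsUnit (((2 : ℤ) : ZMod ℓ)) := by push_cast; exact h2
  have hprod : ∏ m ∈ Finset.range ℓ, w m = z ^ ℓ := by
    rw [hz, hwdef, Finset.prod_mul_distrib]
    have h1 : ∏ m ∈ Finset.range ℓ, (x * v⁻¹ * ε ^ (-2 * (m : ℤ) + 1) - 1)
        = (x * v⁻¹) ^ ℓ - 1 ^ ℓ := aux_prod_lin' ℓ hodd ε hε (x * v⁻¹) 1 (-2) 1 hcneg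
    have h2' : ∏ m ∈ Finset.range ℓ, (v * ε ^ (2 * (m : ℤ) - 1) - x⁻¹)
        = v ^ ℓ - (x⁻¹) ^ ℓ := by
      have := aux_prod_lin' ℓ hodd ε hε v x⁻¹ 2 (-1) hcpos
      simpa [sub_eq_add_neg] using this
    rw [h1, h2', mul_pow, inv_pow, inv_pow, one_pow]
  have hPne : ∀ N, (∏ m ∈ Finset.range N, w m) ≠ 0 :=
    fun N => Finset.prod_ne_zero_iff.2 fun m _ => hwne m
  have hzne : z ≠ 0 := by
    intro h
    exact hPne ℓ (by rw [hprod, h, zero_pow hℓ])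
  set uf : ZMod ℓ → ℂ := fun n => z ^ n.val * ∏ m ∈ Finset.range n.val, (w m)⁻¹ with hufdef
  have hufval : ∀ n : ZMod ℓ, uf n = z ^ n.val * (∏ m ∈ Finset.range n.val, w m)⁻¹ := by
    intro n
    show z ^ n.val * ∏ m ∈ Finset.range n.val, (w m)⁻¹ = _
    rw [Finset.prod_inv_distrib]
  have hufne : ∀ n, uf n ≠ 0 := fun n => by
    rw [hufval n]; exact mul_ne_zero (pow_ne_zero _ hzne) (inv_ne_zero (hPne _))
  have hU' : U = Matrix.diagonal uf := hU
  have hUinv : U⁻¹ = Matrix.diagonal fun n => (uf n)⁻¹ := by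
    rw [hU']
    refine Matrix.inv_eq_right_inv ?_
    rw [Matrix.diagonal_mul_diagonal]
    have : (fun i => uf i * (uf i)⁻¹) = fun _ : ZMod ℓ => (1 : ℂ) :=
      funext fun n => mul_inv_cancel₀ (hufne n)
    rw [this, Matrix.diagonal_one]
  set C : Matrix (ZMod ℓ) (ZMod ℓ) ℂ :=
    Matrix.of (fun i j : ZMod ℓ => if j = i + 1 then 1 else 0) with hCdef
  have hBC : B * C = 1 := by
    ext i j
    rw [hB, Matrix.mul_apply, Finset.sum_eq_single (j - 1)]
    · simp [hCdef, Matrix.one_apply, sub_add_cancel]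
    · intro k _ hk
      have : j ≠ k + 1 := fun h => hk (by rw [h]; ring)
      simp [hCdef, this]
    · simp
  have hBinv : B⁻¹ = C := Matrix.inv_eq_right_inv hBC
  have hA1 : A⁻¹ = Matrix.diagonal fun n : ZMod ℓ => (ε ^ (2 * n.val))⁻¹ := by
    rw [hA]
    refine Matrix.inv_eq_right_inv ?_
    rw [Matrix.diagonal_mul_diagonal]
    have : (fun i : ZMod ℓ => ε ^ (2 * i.val) * (ε ^ (2 * i.val))⁻¹) = fun _ : ZMod ℓ => (1 : ℂ) :=
      funext fun n => mul_inv_cancel₀ (pow_ne_zero _ hεne)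
    rw [this, Matrix.diagonal_one]
  have hM : ((x * v⁻¹ * ε) • A⁻¹ - 1) * ((v * ε⁻¹) • A - x⁻¹ • (1 : Matrix (ZMod ℓ) (ZMod ℓ) ℂ))
      = Matrix.diagonal fun n : ZMod ℓ => w n.val := by
    rw [hA1, hA, ← Matrix.diagonal_one, ← Matrix.diagonal_smul, ← Matrix.diagonal_smul,
      ← Matrix.diagonal_smul, Matrix.diagonal_sub, Matrix.diagonal_sub,
      Matrix.diagonal_mul_diagonal]
    refine congrArg Matrix.diagonal (funext fun n => ?_)
    have e1 : ε ^ (-2 * ((n.val : ℕ) : ℤ) + 1) = ε * (ε ^ (2 * n.val))⁻¹ := by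
      rw [show (-2 * ((n.val : ℕ) : ℤ) + 1) = 1 - ((2 * n.val : ℕ) : ℤ) by push_cast; ring,
        zpow_sub₀ hεne, zpow_one, zpow_natCast, div_eq_mul_inv]
    have e2 : ε ^ (2 * ((n.val : ℕ) : ℤ) - 1) = ε⁻¹ * ε ^ (2 * n.val) := by
      rw [show (2 * ((n.val : ℕ) : ℤ) - 1) = ((2 * n.val : ℕ) : ℤ) - 1 by push_cast; ring,
        zpow_sub₀ hεne, zpow_one, zpow_natCast, div_eq_mul_inv, mul_comm]
    simp only [Pi.smul_apply, smul_eq_mul, Pi.one_apply, mul_one, hwdef]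
    rw [e1, e2]; ring
  -- key scalar identity
  have key : ∀ i : ZMod ℓ, (uf i)⁻¹ * w i.val * uf (i + 1) = z := by
    intro i
    have hvlt : i.val < ℓ := ZMod.val_lt i
    have hcast : i + 1 = (((i.val + 1 : ℕ)) : ZMod ℓ) := by
      push_cast
      rw [ZMod.natCast_rightInverse i]
    rcases lt_or_ge (i.val + 1) ℓ with hlt | hge
    · have hval : (i + 1).val = i.val + 1 := by
        rw [hcast, ZMod.val_cast_of_lt hlt]
      rw [hufval, hufval, hval, Finset.prod_range_succ, pow_succ]
      have hQ := hPne i.val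
      have hwn := hwne i.val
      field_simp
    · have hℓeq : i.val + 1 = ℓ := by omega
      have hzero : i + 1 = 0 := by
        rw [hcast, hℓeq, ZMod.natCast_self]
      rw [hzero, hufval, hufval]
      simp only [ZMod.val_zero, pow_zero, Finset.range_zero, Finset.prod_empty, inv_one,
        mul_one, one_mul]
      have hptot : (∏ m ∈ Finset.range i.val, w m) * w i.val = z ^ i.val * z := by
        have h1 : (∏ m ∈ Finset.range (i.val + 1), w m) = z ^ (i.val + 1) := by
          rw [hℓeq]; exact hprod
        rw [Finset.prod_range_succ] at h1
        rw [h1, pow_succ]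
      have hQ := hPne i.val
      have hwn := hwne i.val
      have hzp : z ^ i.val ≠ 0 := pow_ne_zero _ hzne
      field_simp
      rw [hptot]
  -- assemble
  rw [hBinv, hM, hUinv, hU', ← Matrix.mul_assoc, Matrix.diagonal_mul_diagonal]
  ext i j
  rw [Matrix.mul_diagonal, Matrix.diagonal_mul, Matrix.smul_apply, smul_eq_mul]
  simp only [hCdef, Matrix.of_apply]
  split_ifs with h
  · rw [mul_one, mul_one, h]
    exact key i
  · simp
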